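/- Let d ≥ 2 be an integer, let (τ_{k,j})_{2≤k≤d, k≤j≤d} be a triangular array of positive reals, and let τ and T be respectively the minimum and the maximum of this array. Let b₁,…,b_d be reals with b₁² + … + b_d² = 1. Suppose there is a real ε with 0 < ε ≤ τ / (4(d−1)(1 + T/τ)^{d−2}) such that for every k ∈ [2,d], |Σ_{j=k}^{d} b_j τ_{k,j}| < ε. Then: |b_j| ≤ ε(1 + T/τ)^{d−2}/τ for every j ∈ [2,d]; |b₁| ≥ 3/4; and |b₁ + b₂ + … + b_d| ≥ 1/2. -/

import Mathlib

/-- Quantitative lemma: if `b₁² + ⋯ + b_d² = 1` and all the sums `Σ_{j=k}^d b_j τ_{k,j}`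
(`k ∈ [2,d]`) are smaller than `ε ≤ τ / (4(d-1)(1 + T/τ)^{d-2})` in absolute value, where
`τ` and `T` are the minimum and maximum of the positive array `(τ_{k,j})_{2≤k≤d, k≤j≤d}`,
then `|b_j| ≤ ε (1 + T/τ)^{d-2} / τ` for `j ∈ [2,d]`, `|b₁| ≥ 3/4` and
`|b₁ + ⋯ + b_d| ≥ 1/2`. -/
theorem small_coefficients_lemma (d : ℕ) (hd : 2 ≤ d)
    (τmat : ℕ → ℕ → ℝ)
    (hpos : ∀ k j, 2 ≤ k → k ≤ j → j ≤ d → 0 < τmat k j)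
    (τ T : ℝ)
    (hτ : IsLeast {x : ℝ | ∃ k j, 2 ≤ k ∧ k ≤ j ∧ j ≤ d ∧ x = τmat k j} τ)
    (hT : IsGreatest {x : ℝ | ∃ k j, 2 ≤ k ∧ k ≤ j ∧ j ≤ d ∧ x = τmat k j} T)
    (b : ℕ → ℝ) (hb : ∑ j ∈ Finset.Icc 1 d, (b j) ^ 2 = 1)
    (ε : ℝ) (hε : 0 < ε)
    (hε' : ε ≤ τ / (4 * ((d : ℝ) - 1) * (1 + T / τ) ^ (d - 2)))
    (hsmall : ∀ k, 2 ≤ k → k ≤ d → |∑ j ∈ Finset.Icc k d, b j * τmat k j| < ε) :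
    (∀ j, 2 ≤ j → j ≤ d → |b j| ≤ ε * (1 + T / τ) ^ (d - 2) / τ) ∧
      3 / 4 ≤ |b 1| ∧ 1 / 2 ≤ |∑ j ∈ Finset.Icc 1 d, b j| := by
  obtain ⟨⟨k0, j0, hk0, hkj0, hj0, hτeq⟩, hτlb⟩ := hτ
  obtain ⟨_, hTub⟩ := hT
  have hτpos : 0 < τ := hτeq ▸ hpos _ _ hk0 hkj0 hj0
  have hτT : τ ≤ T := hTub ⟨k0, j0, hk0, hkj0, hj0, hτeq⟩
  set C : ℝ := 1 + T / τ with hC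
  have hr1 : 1 ≤ T / τ := (one_le_div hτpos).2 hτT
  have hC1 : 1 < C := by simp only [hC]; linarith
  have hCpos : 0 < C := by linarith
  have hCpow : ∀ n : ℕ, (1:ℝ) ≤ C ^ n := fun n => one_le_pow₀ hC1.le
  -- key induction
  have key : ∀ n : ℕ, ∀ k, 2 ≤ k → k ≤ d → d - k = n → |b k| * τ ≤ ε * C ^ (d - k) := by
    intro n
    induction n using Nat.strong_induction_on with
    | _ n ih =>
      intro k hk2 hkd hn
      have hτkk : τ ≤ τmat k k := hτlb ⟨k, k, hk2, le_refl k, hkd, rfl⟩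
      have hsplit : Finset.Icc k d = insert k (Finset.Icc (k+1) d) := by
        ext x; simp only [Finset.mem_Icc, Finset.mem_insert]; omega
      have hknot : k ∉ Finset.Icc (k+1) d := by simp
      have hsum : ∑ j ∈ Finset.Icc k d, b j * τmat k j
          = b k * τmat k k + ∑ j ∈ Finset.Icc (k+1) d, b j * τmat k j := by
        rw [hsplit, Finset.sum_insert hknot]
      have hS : |∑ j ∈ Finset.Icc (k+1) d, b j * τmat k j|
          ≤ ∑ j ∈ Finset.Icc (k+1) d, (ε * C ^ (d - j) / τ) * T := by
        refine (Finset.abs_sum_le_sum_abs _ _).trans (Finset.sum_le_sum ?_)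
        intro j hj
        simp only [Finset.mem_Icc] at hj
        have hbj : |b j| * τ ≤ ε * C ^ (d - j) :=
          ih (d - j) (by omega) j (by omega) hj.2 rfl
        have hbj' : |b j| ≤ ε * C ^ (d - j) / τ := by
          rw [le_div_iff₀ hτpos]; exact hbj
        have hτkj : τmat k j ≤ T := hTub ⟨k, j, hk2, by omega, hj.2, rfl⟩
        have hτkjpos : 0 < τmat k j := hpos k j hk2 (by omega) hj.2
        rw [abs_mul, abs_of_pos hτkjpos]
        exact mul_le_mul hbj' hτkj hτkjpos.le (by positivity)
      have hgeom : ∑ j ∈ Finset.Icc (k+1) d, C ^ (d - j)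
          = ∑ i ∈ Finset.range (d - k), C ^ i := by
        refine Finset.sum_nbij' (fun j => d - j) (fun i => d - i) ?_ ?_ ?_ ?_ ?_
        · intro a ha; simp only [Finset.mem_Icc] at ha; simp only [Finset.mem_range]; omega
        · intro a ha; simp only [Finset.mem_range] at ha; simp only [Finset.mem_Icc]; omega
        · intro a ha; simp only [Finset.mem_Icc] at ha; show d - (d - a) = a; omega
        · intro a ha; simp only [Finset.mem_range] at ha; show d - (d - a) = a; omega
        · intro a ha; rfl
      have hgval : ∑ i ∈ Finset.range (d - k), C ^ i = (C ^ (d - k) - 1) / (T / τ) := by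
        rw [geom_sum_eq hC1.ne']
        congr 1
        simp [hC]
      have hrpos : (0:ℝ) < T / τ := by linarith
      have hS2 : ∑ j ∈ Finset.Icc (k+1) d, (ε * C ^ (d - j) / τ) * T
          ≤ ε * (C ^ (d - k) - 1) := by
        have : ∑ j ∈ Finset.Icc (k+1) d, (ε * C ^ (d - j) / τ) * T
            = (ε * (T / τ)) * ∑ j ∈ Finset.Icc (k+1) d, C ^ (d - j) := by
          rw [Finset.mul_sum]
          refine Finset.sum_congr rfl fun j _ => by ring
        rw [this, hgeom, hgval, mul_assoc, mul_comm (T/τ),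
          div_mul_cancel₀ _ hrpos.ne']
      have hfull := hsmall k hk2 hkd
      have habs : |b k * τmat k k| ≤ ε + ε * (C ^ (d - k) - 1) := by
        have h1 : b k * τmat k k = (∑ j ∈ Finset.Icc k d, b j * τmat k j)
            - ∑ j ∈ Finset.Icc (k+1) d, b j * τmat k j := by rw [hsum]; ring
        calc |b k * τmat k k| ≤ |∑ j ∈ Finset.Icc k d, b j * τmat k j|
              + |∑ j ∈ Finset.Icc (k+1) d, b j * τmat k j| := by
                rw [h1]; exact abs_sub _ _
          _ ≤ ε + ε * (C ^ (d - k) - 1) := by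
                have := hS.trans hS2
                linarith [hfull.le]
      have hτkkpos : 0 < τmat k k := hpos k k hk2 le_rfl hkd
      have : |b k| * τ ≤ |b k| * τmat k k := by
        exact mul_le_mul_of_nonneg_left hτkk (abs_nonneg _)
      calc |b k| * τ ≤ |b k| * τmat k k := this
        _ = |b k * τmat k k| := by rw [abs_mul, abs_of_pos hτkkpos]
        _ ≤ ε + ε * (C ^ (d - k) - 1) := habs
        _ = ε * C ^ (d - k) := by ring
  -- first conclusion
  have hbound : ∀ j, 2 ≤ j → j ≤ d → |b j| ≤ ε * C ^ (d - 2) / τ := by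
    intro j hj2 hjd
    have h1 := key (d - j) j hj2 hjd rfl
    have h2 : C ^ (d - j) ≤ C ^ (d - 2) := pow_le_pow_right₀ hC1.le (by omega)
    rw [le_div_iff₀ hτpos]
    calc |b j| * τ ≤ ε * C ^ (d - j) := h1
      _ ≤ ε * C ^ (d - 2) := by nlinarith [hε]
  set E : ℝ := ε * C ^ (d - 2) / τ with hEdef
  have hEpos : 0 < E := by positivity
  have hd1 : (1:ℝ) ≤ (d:ℝ) - 1 := by
    have : (2:ℝ) ≤ (d:ℝ) := by exact_mod_cast hd
    linarith
  have hCpow2 : (0:ℝ) < C ^ (d - 2) := pow_pos hCpos _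
  have hE' : E ≤ 1 / (4 * ((d:ℝ) - 1)) := by
    have hD : (0:ℝ) < 4 * ((d:ℝ) - 1) := by linarith
    have hεb : ε * (4 * ((d:ℝ) - 1) * C ^ (d - 2)) ≤ τ := by
      rw [← le_div_iff₀ (by positivity)]; exact hε'
    rw [hEdef, div_le_div_iff₀ hτpos hD]
    nlinarith
  -- card of Icc 2 d
  have hcard : (Finset.Icc 2 d).card = d - 1 := by
    rw [Nat.card_Icc]; omega
  have hcardR : ((Finset.Icc 2 d).card : ℝ) = (d:ℝ) - 1 := by
    rw [hcard]
    have : (2:ℕ) ≤ d := hd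
    push_cast [Nat.cast_sub (by omega : 1 ≤ d)]
    ring
  have habsum : ∑ j ∈ Finset.Icc 2 d, |b j| ≤ ((d:ℝ) - 1) * E := by
    calc ∑ j ∈ Finset.Icc 2 d, |b j| ≤ ∑ _j ∈ Finset.Icc 2 d, E := by
          refine Finset.sum_le_sum fun j hj => ?_
          simp only [Finset.mem_Icc] at hj
          exact hbound j hj.1 hj.2
      _ = ((d:ℝ) - 1) * E := by rw [Finset.sum_const, nsmul_eq_mul, hcardR]
  have habsum4 : ∑ j ∈ Finset.Icc 2 d, |b j| ≤ 1 / 4 := by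
    have : ((d:ℝ) - 1) * E ≤ ((d:ℝ) - 1) * (1 / (4 * ((d:ℝ) - 1))) :=
      mul_le_mul_of_nonneg_left hE' (by linarith)
    have heq : ((d:ℝ) - 1) * (1 / (4 * ((d:ℝ) - 1))) = 1 / 4 := by
      field_simp
    linarith
  -- sum of squares
  have hsq : ∑ j ∈ Finset.Icc 2 d, (b j) ^ 2 ≤ 1 / 16 := by
    have hEsq : ∀ j ∈ Finset.Icc 2 d, (b j) ^ 2 ≤ E * |b j| := by
      intro j hj
      simp only [Finset.mem_Icc] at hj
      have h1 := hbound j hj.1 hj.2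
      have : (b j) ^ 2 = |b j| * |b j| := by rw [sq, ← abs_mul_abs_self]
      rw [this]
      exact mul_le_mul_of_nonneg_right h1 (abs_nonneg _)
    calc ∑ j ∈ Finset.Icc 2 d, (b j) ^ 2 ≤ ∑ j ∈ Finset.Icc 2 d, E * |b j| :=
          Finset.sum_le_sum hEsq
      _ = E * ∑ j ∈ Finset.Icc 2 d, |b j| := by rw [Finset.mul_sum]
      _ ≤ (1 / (4 * ((d:ℝ) - 1))) * (((d:ℝ) - 1) * E) := by
          refine mul_le_mul hE' habsum (Finset.sum_nonneg fun j _ => abs_nonneg _) ?_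
          positivity
      _ = E / 4 := by field_simp
      _ ≤ 1 / 16 := by
          have := hE'
          have h4 : 1 / (4 * ((d:ℝ) - 1)) ≤ 1 / 4 := by
            apply one_div_le_one_div_of_le <;> linarith
          linarith
  -- split the unit sum
  have hsplit1 : Finset.Icc 1 d = insert 1 (Finset.Icc 2 d) := by
    ext x; simp only [Finset.mem_Icc, Finset.mem_insert]; omega
  have h1not : (1:ℕ) ∉ Finset.Icc 2 d := by simp
  have hbsq : (b 1) ^ 2 + ∑ j ∈ Finset.Icc 2 d, (b j) ^ 2 = 1 := by
    rw [← hb, hsplit1, Finset.sum_insert h1not]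
  have hb1 : (3/4 : ℝ) ≤ |b 1| := by
    nlinarith [abs_nonneg (b 1), sq_abs (b 1)]
  refine ⟨hbound, hb1, ?_⟩
  have hsum1 : ∑ j ∈ Finset.Icc 1 d, b j = b 1 + ∑ j ∈ Finset.Icc 2 d, b j := by
    rw [hsplit1, Finset.sum_insert h1not]
  have hS : |∑ j ∈ Finset.Icc 2 d, b j| ≤ 1 / 4 :=
    (Finset.abs_sum_le_sum_abs _ _).trans habsum4
  rw [hsum1]
  calc (1/2 : ℝ) ≤ |b 1| - |∑ j ∈ Finset.Icc 2 d, b j| := by linarith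
    _ ≤ |b 1 + ∑ j ∈ Finset.Icc 2 d, b j| := by
        have := abs_sub_abs_le_abs_sub (b 1) (-(∑ j ∈ Finset.Icc 2 d, b j))
        simp only [abs_neg, sub_neg_eq_add] at this
        exact this
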